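/- Let N ≥ 1 and let S be a nonempty finite set of vectors in Fin N → ℝ. Then there exists ε₀ > 0 such that for every ε with 0 < ε < ε₀, any x ∈ S minimizing the weighted sum Σ_{j=0}^{N−1} ε^j · x_j over S is a lexicographic minimum of S, i.e., x ≤ y in the lexicographic order on Fin N → ℝ for every y ∈ S. -/

import Mathlib

open Finset

private lemma lex_sum_aux {N : ℕ} (x y : Fin N → ℝ) (h : toLex y < toLex x) :
    ∃ ε₀ : ℝ, 0 < ε₀ ∧ ∀ ε : ℝ, 0 < ε → ε < ε₀ →
      ∑ j : Fin N, ε ^ (j : ℕ) * y j < ∑ j : Fin N, ε ^ (j : ℕ) * x j := by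
  obtain ⟨i, heq, hlt⟩ := h
  set d : Fin N → ℝ := fun j => x j - y j with hd
  set M : ℝ := ∑ j : Fin N, |d j| with hM
  have hM0 : 0 ≤ M := Finset.sum_nonneg fun j _ => abs_nonneg _
  have hlt' : y i < x i := hlt
  have hδ : 0 < d i := by simp only [hd]; linarith
  refine ⟨min 1 (d i / (M + 1)), lt_min one_pos (by positivity), fun ε hε hε' => ?_⟩
  have hε1 : ε ≤ 1 := le_of_lt (lt_of_lt_of_le hε' (min_le_left _ _))
  have hεM : ε * M < d i := by
    have h2 : ε < d i / (M + 1) := lt_of_lt_of_le hε' (min_le_right _ _)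
    have h3 : ε * (M + 1) < d i := (lt_div_iff₀ (by linarith : (0:ℝ) < M + 1)).1 h2
    nlinarith
  rw [← sub_pos, ← Finset.sum_sub_distrib]
  have hsum : ∑ j : Fin N, (ε ^ (j:ℕ) * x j - ε ^ (j:ℕ) * y j)
      = ε ^ (i:ℕ) * d i + ∑ j ∈ Finset.univ.erase i, ε ^ (j:ℕ) * d j := by
    rw [show (∑ j : Fin N, (ε ^ (j:ℕ) * x j - ε ^ (j:ℕ) * y j))
        = ∑ j : Fin N, ε ^ (j:ℕ) * d j from
      Finset.sum_congr rfl fun j _ => by simp only [hd]; ring]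
    exact (Finset.add_sum_erase _ (fun j : Fin N => ε ^ (j:ℕ) * d j) (Finset.mem_univ i)).symm
  rw [hsum]
  have hbound : ∀ j ∈ Finset.univ.erase i, -(ε ^ ((i:ℕ)+1) * |d j|) ≤ ε ^ (j:ℕ) * d j := by
    intro j hj
    rcases lt_trichotomy j i with hji | hji | hji
    · have hyj : y j = x j := heq j hji
      have hdj : d j = 0 := by simp only [hd]; rw [hyj]; ring
      simp only [hdj, mul_zero, abs_zero, neg_zero, le_refl]
    · exact absurd hji (Finset.ne_of_mem_erase hj)
    · have hij : (i:ℕ) + 1 ≤ (j:ℕ) := hji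
      have h1 : ε ^ (j:ℕ) ≤ ε ^ ((i:ℕ)+1) := pow_le_pow_of_le_one hε.le hε1 hij
      have h2 : ε ^ (j:ℕ) * d j ≥ -(ε ^ (j:ℕ) * |d j|) := by
        have := neg_abs_le (d j)
        nlinarith [pow_pos hε (j:ℕ)]
      have h3 : ε ^ (j:ℕ) * |d j| ≤ ε ^ ((i:ℕ)+1) * |d j| :=
        mul_le_mul_of_nonneg_right h1 (abs_nonneg _)
      linarith
  have hsum2 : -(ε ^ ((i:ℕ)+1) * M) ≤ ∑ j ∈ Finset.univ.erase i, ε ^ (j:ℕ) * d j := by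
    calc -(ε ^ ((i:ℕ)+1) * M) ≤ -(ε ^ ((i:ℕ)+1) * ∑ j ∈ Finset.univ.erase i, |d j|) := by
          have : ∑ j ∈ Finset.univ.erase i, |d j| ≤ M :=
            Finset.sum_le_sum_of_subset_of_nonneg (Finset.erase_subset _ _)
              (fun j _ _ => abs_nonneg _)
          nlinarith [pow_pos hε ((i:ℕ)+1)]
      _ = ∑ j ∈ Finset.univ.erase i, -(ε ^ ((i:ℕ)+1) * |d j|) := by
          rw [Finset.mul_sum, ← Finset.sum_neg_distrib]
      _ ≤ _ := Finset.sum_le_sum hbound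
  have hpow : ε ^ ((i:ℕ)+1) = ε ^ (i:ℕ) * ε := by ring
  nlinarith [pow_pos hε (i:ℕ)]

theorem weighted_sum_reduction_lexmin
    {N : ℕ} (hN : 1 ≤ N) (S : Finset (Fin N → ℝ)) (hS : S.Nonempty) :
    ∃ ε₀ : ℝ, 0 < ε₀ ∧ ∀ ε : ℝ, 0 < ε → ε < ε₀ →
      ∀ x ∈ S, (∀ y ∈ S, ∑ j : Fin N, ε ^ (j : ℕ) * x j ≤ ∑ j : Fin N, ε ^ (j : ℕ) * y j) →
        ∀ y ∈ S, toLex x ≤ toLex y := by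
  classical
  set f : (Fin N → ℝ) × (Fin N → ℝ) → ℝ := fun p =>
    if h : toLex p.2 < toLex p.1 then (lex_sum_aux p.1 p.2 h).choose else 1 with hf
  have hfpos : ∀ p, 0 < f p := by
    intro p
    by_cases h : toLex p.2 < toLex p.1
    · simp only [hf, dif_pos h]; exact (lex_sum_aux p.1 p.2 h).choose_spec.1
    · simp [hf, h]
  have hne : (S ×ˢ S).Nonempty := hS.product hS
  refine ⟨(S ×ˢ S).inf' hne f, ?_, ?_⟩
  · rw [Finset.lt_inf'_iff]; exact fun p _ => hfpos p
  · intro ε hε hε' x hx hmin y hy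
    by_contra hxy
    have hyx : toLex y < toLex x := by
      have ht := (Pi.isTrichotomous_lex (· < · : Fin N → Fin N → Prop)
        (fun {_ : Fin N} => ((· < ·) : ℝ → ℝ → Prop)) (IsWellFounded.wf)).trichotomous
        (a := y) (b := x)
      have ht' := or_iff_not_imp_left.2 fun h1 => or_iff_not_imp_right.2 fun h2 => ht h1 h2
      rcases ht' with h1 | h1 | h1
      · exact h1
      · exact absurd (le_of_eq (congrArg toLex h1.symm)) hxy
      · exact absurd (le_of_lt h1) hxy
    have hmem : (x, y) ∈ S ×ˢ S := Finset.mk_mem_product hx hy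
    have hle : (S ×ˢ S).inf' hne f ≤ f (x, y) := Finset.inf'_le f hmem
    have hfxy : f (x, y) = (lex_sum_aux x y hyx).choose := by simp [hf, hyx]
    have := (lex_sum_aux x y hyx).choose_spec.2 ε hε (by rw [← hfxy]; exact lt_of_lt_of_le hε' hle)
    exact absurd (hmin y hy) (not_le.2 this)
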